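/- Let R be a commutative ring and let M be an R-module which is the union of an increasing sequence (P_n)_{n ∈ ℕ} of submodules, each of which is projective as an R-module. Then M has projective dimension at most 1: there is a short exact sequence 0 → ⊕_{n∈ℕ} P_n → ⊕_{n∈ℕ} P_n → M → 0, where the first map sends (x_n)_n to (x_n − ι_{n−1}(x_{n−1}))_n (with ι_{n−1} the inclusion P_{n−1} ⊆ P_n and the convention x_{−1} = 0); consequently Ext^i_R(M, Q) = 0 for every R-module Q and every integer i ≥ 2. -/

import Mathlib

open CategoryTheory
open scoped DirectSum

/-- The first map `(xₙ)ₙ ↦ (xₙ − ι(xₙ₋₁))ₙ` of the Milnor exact sequence associated to an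
increasing sequence of submodules `P : ℕ → Submodule R M` (with the convention `x₋₁ = 0`):
on the generator `x` in the `n`-th summand it takes the value `x − ι(x)` with `x` placed in
degree `n` and `ι(x)` in degree `n + 1`. -/
noncomputable def milnorShift (R M : Type) [CommRing R] [AddCommGroup M] [Module R M]
    (P : ℕ → Submodule R M) (hP : Monotone P) :
    (⨁ n : ℕ, ↥(P n)) →ₗ[R] (⨁ n : ℕ, ↥(P n)) :=
  DirectSum.toModule R ℕ _ fun n =>
    DirectSum.lof R ℕ (fun k => ↥(P k)) n -
      (DirectSum.lof R ℕ (fun k => ↥(P k)) (n + 1)).comp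
        (Submodule.inclusion (hP (Nat.le_succ n)))

/-- The second map of the Milnor exact sequence: the sum of the inclusions `P n ⊆ M`. -/
noncomputable def milnorSum (R M : Type) [CommRing R] [AddCommGroup M] [Module R M]
    (P : ℕ → Submodule R M) :
    (⨁ n : ℕ, ↥(P n)) →ₗ[R] M :=
  DirectSum.toModule R ℕ M fun n => (P n).subtype

variable {R M : Type} [CommRing R] [AddCommGroup M] [Module R M]
  {P : ℕ → Submodule R M} (hP : Monotone P)

lemma milnorShift_lof (n : ℕ) (y : ↥(P n)) :
    milnorShift R M P hP (DirectSum.lof R ℕ (fun k => ↥(P k)) n y) =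
      DirectSum.lof R ℕ (fun k => ↥(P k)) n y -
        DirectSum.lof R ℕ (fun k => ↥(P k)) (n + 1)
          (Submodule.inclusion (hP (Nat.le_succ n)) y) := by
  simp [milnorShift, DirectSum.toModule_lof]

lemma milnorShift_apply_zero (x : ⨁ n : ℕ, ↥(P n)) :
    milnorShift R M P hP x 0 = x 0 := by
  induction x using DirectSum.induction_on with
  | zero => simp
  | of n y =>
    rw [← DirectSum.lof_eq_of R, milnorShift_lof]
    simp only [DirectSum.lof_eq_of, DirectSum.sub_apply]
    rcases Nat.eq_zero_or_pos n with rfl | hn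
    · rw [DirectSum.of_eq_of_ne _ _ _ (show 0 ≠ (0:ℕ)+1 by omega), sub_zero]
    · rw [DirectSum.of_eq_of_ne _ _ _ (show 0 ≠ n by omega),
        DirectSum.of_eq_of_ne _ _ _ (show 0 ≠ n+1 by omega), sub_zero]
  | add a b ha hb => simp [map_add, DirectSum.add_apply, ha, hb]

lemma milnorShift_apply_succ (x : ⨁ n : ℕ, ↥(P n)) (k : ℕ) :
    milnorShift R M P hP x (k + 1) =
      x (k + 1) - Submodule.inclusion (hP (Nat.le_succ k)) (x k) := by
  induction x using DirectSum.induction_on with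
  | zero => simp
  | of n y =>
    rw [← DirectSum.lof_eq_of R, milnorShift_lof]
    simp only [DirectSum.lof_eq_of, DirectSum.sub_apply]
    rcases eq_or_ne n (k + 1) with rfl | h1
    · rw [DirectSum.of_eq_of_ne _ _ _ (show k+1 ≠ k+1+1 by omega),
        DirectSum.of_eq_of_ne _ _ _ (show k ≠ k+1 by omega), map_zero, sub_zero]
    · rcases eq_or_ne n k with rfl | h2
      · rw [DirectSum.of_eq_of_ne _ _ _ h1.symm, DirectSum.of_eq_same, DirectSum.of_eq_same,
          zero_sub]
      · rw [DirectSum.of_eq_of_ne _ _ _ h1.symm, DirectSum.of_eq_of_ne _ _ _ (show k+1 ≠ n+1 by omega),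
          DirectSum.of_eq_of_ne _ _ _ h2.symm, map_zero, sub_zero]
  | add a b ha hb =>
    simp only [map_add, DirectSum.add_apply, ha, hb]
    abel

lemma milnorSum_of (n : ℕ) (y : ↥(P n)) :
    milnorSum R M P (DirectSum.of (fun k => ↥(P k)) n y) = (y : M) := by
  rw [← DirectSum.lof_eq_of R]
  simp [milnorSum, DirectSum.toModule_lof]

lemma milnorShift_injective : Function.Injective (milnorShift R M P hP) := by
  rw [← LinearMap.ker_eq_bot, eq_bot_iff]
  intro x hx
  rw [LinearMap.mem_ker] at hx
  have key : ∀ k, x k = 0 := by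
    intro k
    induction k with
    | zero =>
      have := milnorShift_apply_zero hP x
      rw [hx] at this
      simpa using this.symm
    | succ k ih =>
      have := milnorShift_apply_succ hP x k
      rw [hx, ih, map_zero, DirectSum.zero_apply, sub_zero] at this
      exact this.symm
  simp only [Submodule.mem_bot]
  exact DFinsupp.ext fun k => key k

lemma milnorSum_comp_milnorShift :
    (milnorSum R M P).comp (milnorShift R M P hP) = 0 := by
  apply DirectSum.linearMap_ext
  intro n
  ext y
  show milnorSum R M P (milnorShift R M P hP (DirectSum.of (fun k => ↥(P k)) n y)) = 0
  rw [← DirectSum.lof_eq_of R, milnorShift_lof hP, map_sub, DirectSum.lof_eq_of R,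
    DirectSum.lof_eq_of R, milnorSum_of, milnorSum_of, Submodule.coe_inclusion, sub_self]

lemma milnorSum_eq_sum (x : ⨁ n : ℕ, ↥(P n)) (t : Finset ℕ) (ht : ∀ k ∉ t, x k = 0) :
    milnorSum R M P x = ∑ k ∈ t, (x k : M) := by
  classical
  have hx : x = ∑ k ∈ t, DirectSum.of (fun n => ↥(P n)) k (x k) := by
    refine DFinsupp.ext fun j => ?_
    rw [DFinsupp.finset_sum_apply]
    by_cases hj : j ∈ t
    · rw [Finset.sum_eq_single j
        (fun b _ hb => DirectSum.of_eq_of_ne (β := fun n => ↥(P n)) b j (x b) hb.symm)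
        (fun h => absurd hj h), DirectSum.of_eq_same]
    · rw [Finset.sum_eq_zero, ht j hj]
      intro b hb
      exact DirectSum.of_eq_of_ne (β := fun n => ↥(P n)) b j (x b) (fun h => hj (h ▸ hb))
  conv_lhs => rw [hx]
  rw [map_sum]
  exact Finset.sum_congr rfl fun k _ => milnorSum_of k (x k)

lemma milnorShift_range :
    LinearMap.range (milnorShift R M P hP) = LinearMap.ker (milnorSum R M P) := by
  classical
  apply le_antisymm
  · rintro _ ⟨z, rfl⟩
    rw [LinearMap.mem_ker, ← LinearMap.comp_apply, milnorSum_comp_milnorShift]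
    rfl
  · intro x hx
    rw [LinearMap.mem_ker] at hx
    -- choose a bound on the support
    obtain ⟨N, hN⟩ : ∃ N, ∀ k, N ≤ k → x k = 0 := by
      refine ⟨(x.support.sup id) + 1, fun k hk => ?_⟩
      by_contra h
      have : k ∈ x.support := DFinsupp.mem_support_iff.2 h
      have := Finset.le_sup (f := id) this
      simp only [id_eq] at this
      omega
    set s : ℕ → M := fun n => ∑ k ∈ Finset.range (n + 1), (x k : M) with hs
    have hs_mem : ∀ n, s n ∈ P n := by
      intro n
      refine Submodule.sum_mem _ fun k hk => ?_
      exact hP (by simpa using Nat.lt_succ_iff.1 (Finset.mem_range.1 hk)) (x k).2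
    have hs_zero : ∀ n, N ≤ n → s n = 0 := by
      intro n hn
      have : s n = milnorSum R M P x := by
        rw [milnorSum_eq_sum x (Finset.range (n + 1))
          (fun k hk => hN k (by simp only [Finset.mem_range] at hk; omega))]
      rw [this, hx]
    refine ⟨DirectSum.mk (fun n => ↥(P n)) (Finset.range (N + 1))
      (fun k => ⟨s k.1, hs_mem k.1⟩), ?_⟩
    set y : ⨁ n : ℕ, ↥(P n) := DirectSum.mk (fun n => ↥(P n)) (Finset.range (N + 1))
      (fun k => ⟨s k.1, hs_mem k.1⟩) with hy
    have hyk : ∀ k, (y k : M) = s k := by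
      intro k
      by_cases hk : k ∈ Finset.range (N + 1)
      · rw [hy, DirectSum.mk_apply_of_mem hk]
      · rw [hy, DirectSum.mk_apply_of_notMem hk, hs_zero k
          (by simp only [Finset.mem_range] at hk; omega)]
        rfl
    refine DFinsupp.ext fun k => ?_
    rcases k with _ | k
    · rw [milnorShift_apply_zero hP y]
      apply Subtype.ext
      rw [hyk 0]
      simp [hs, Finset.sum_range_one]
    · rw [milnorShift_apply_succ hP y k]
      apply Subtype.ext
      push_cast
      rw [Submodule.coe_inclusion, hyk (k + 1), hyk k]
      simp [hs, Finset.sum_range_succ]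

include hP in
lemma milnorSum_surjective (hunion : (⨆ n, P n) = ⊤) :
    Function.Surjective (milnorSum R M P) := by
  intro m
  have hm : m ∈ ⨆ n, P n := hunion ▸ Submodule.mem_top
  obtain ⟨n, hn⟩ := (Submodule.mem_iSup_of_directed _ (Monotone.directed_le hP)).1 hm
  exact ⟨DirectSum.of (fun k => ↥(P k)) n ⟨m, hn⟩, milnorSum_of n ⟨m, hn⟩⟩

section Resolution

open CategoryTheory Limits

variable (R M : Type) [CommRing R] [AddCommGroup M] [Module R M]
  (P : ℕ → Submodule R M) (hP : Monotone P)

noncomputable def milnorComplex : ChainComplex (ModuleCat R) ℕ :=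
  ChainComplex.of
    (fun n => match n with
      | 0 => ModuleCat.of R (⨁ n : ℕ, ↥(P n))
      | 1 => ModuleCat.of R (⨁ n : ℕ, ↥(P n))
      | _ + 2 => ModuleCat.of R PUnit)
    (fun n => match n with
      | 0 => ModuleCat.ofHom (milnorShift R M P hP)
      | _ + 1 => 0)
    (fun n => match n with
      | 0 => Limits.zero_comp
      | _ + 1 => Limits.zero_comp)

lemma milnorComplex_d_1_0 :
    (milnorComplex R M P hP).d 1 0 = ModuleCat.ofHom (milnorShift R M P hP) :=
  by simp [milnorComplex, ChainComplex.of.d]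

lemma milnorComplex_d_succ (n : ℕ) :
    (milnorComplex R M P hP).d (n + 2) (n + 1) = 0 :=
  by simp [milnorComplex, ChainComplex.of.d]; rfl

noncomputable def milnorπ :
    milnorComplex R M P hP ⟶ (ChainComplex.single₀ (ModuleCat R)).obj (ModuleCat.of R M) :=
  (ChainComplex.toSingle₀Equiv _ _).symm ⟨ModuleCat.ofHom (milnorSum R M P), by
    rw [milnorComplex_d_1_0]
    exact ModuleCat.hom_ext (milnorSum_comp_milnorShift hP)⟩

lemma milnorπ_f_zero :
    (milnorπ R M P hP).f 0 = ModuleCat.ofHom (milnorSum R M P) :=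
  ChainComplex.toSingle₀Equiv_symm_apply_f_zero _ _

noncomputable def milnorResolution (hproj : ∀ n, Module.Projective R ↥(P n))
    (hunion : (⨆ n, P n) = ⊤) :
    ProjectiveResolution (ModuleCat.of R M) where
  complex := milnorComplex R M P hP
  projective n := by
    haveI := hproj
    haveI : Module.Projective R (⨁ n : ℕ, ↥(P n)) :=
      (inferInstance : Module.Projective R (Π₀ n, ↥(P n)))
    match n with
    | 0 => exact (IsProjective.iff_projective _).1 inferInstance
    | 1 => exact (IsProjective.iff_projective _).1 inferInstance
    | (n + 2) => exact (IsProjective.iff_projective _).1 inferInstance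
  π := milnorπ R M P hP
  quasiIso := ⟨fun n => by
    cases n with
    | zero =>
      rw [ChainComplex.quasiIsoAt₀_iff, ShortComplex.quasiIso_iff_of_zeros']
      rotate_left
      · rfl
      · rfl
      · rfl
      constructor
      · rw [ShortComplex.moduleCat_exact_iff]
        intro x hx
        have hx' : milnorSum R M P x = 0 := by
          have : ((milnorπ R M P hP).f 0) x = 0 := hx
          rwa [milnorπ_f_zero] at this
        have : x ∈ LinearMap.range (milnorShift R M P hP) := by
          rw [milnorShift_range hP]
          exact hx'
        obtain ⟨y, hy⟩ := this
        refine ⟨y, ?_⟩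
        show ((milnorComplex R M P hP).d 1 0) y = x
        rw [milnorComplex_d_1_0]
        exact hy
      · have : Epi ((milnorπ R M P hP).f 0) := by
          show Epi (ModuleCat.ofHom (milnorSum R M P))
          rw [ModuleCat.epi_iff_surjective]
          exact milnorSum_surjective hP hunion
        exact this
    | succ n =>
      rw [quasiIsoAt_iff_exactAt']
      swap
      · apply ChainComplex.exactAt_succ_single_obj
      rw [HomologicalComplex.exactAt_iff' _ (n + 2) (n + 1) n (by simp) (by simp)]
      match n with
      | 0 =>
        rw [ShortComplex.moduleCat_exact_iff]
        intro x hx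
        have hx' : milnorShift R M P hP x = 0 := by
          have : ((milnorComplex R M P hP).d 1 0) x = 0 := hx
          rwa [milnorComplex_d_1_0] at this
        have : x = 0 := by
          apply milnorShift_injective hP
          rw [hx']; exact (map_zero (milnorShift R M P hP)).symm
        refine ⟨0, ?_⟩
        show ((milnorComplex R M P hP).d 2 1) 0 = x
        rw [this]; exact map_zero _
      | (n + 1) =>
        exact ShortComplex.exact_of_isZero_X₂ _
          (ModuleCat.isZero_of_subsingleton (ModuleCat.of R PUnit))⟩

end Resolution

/-- A module which is the union of an increasing sequence of projective submodules has
projective dimension at most `1`: there is a short exact sequence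
`0 → ⊕ₙ Pₙ → ⊕ₙ Pₙ → M → 0` whose first map sends `(xₙ)ₙ` to `(xₙ − ι(xₙ₋₁))ₙ`, and
consequently `Ext^i_R(M, Q) = 0` for every module `Q` and every `i ≥ 2`. -/
theorem projective_dimension_le_one_of_increasing_union_of_projectives
    (R M : Type) [CommRing R] [AddCommGroup M] [Module R M]
    (P : ℕ → Submodule R M) (hP : Monotone P)
    (hproj : ∀ n, Module.Projective R ↥(P n))
    (hunion : (⨆ n, P n) = ⊤) :
    Function.Injective (milnorShift R M P hP) ∧
    LinearMap.range (milnorShift R M P hP) = LinearMap.ker (milnorSum R M P) ∧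
    Function.Surjective (milnorSum R M P) ∧
    ∀ (Q : ModuleCat R) (i : ℕ), 2 ≤ i →
      Limits.IsZero (((Ext R (ModuleCat R) i).obj
        (Opposite.op (ModuleCat.of R M))).obj Q) := by
  refine ⟨milnorShift_injective hP, milnorShift_range hP,
    milnorSum_surjective hP hunion, ?_⟩
  intro Q i hi
  obtain ⟨n, rfl⟩ : ∃ n, i = n + 2 := ⟨i - 2, by omega⟩
  refine Limits.IsZero.of_iso ?_
    ((milnorResolution R M P hP hproj hunion).isoExt (n + 2) Q)
  rw [← HomologicalComplex.exactAt_iff_isZero_homology, HomologicalComplex.exactAt_iff]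
  refine ShortComplex.exact_of_isZero_X₂ _ ?_
  rw [Limits.IsZero.iff_id_eq_zero]
  ext (x : _ ⟶ _)
  obtain rfl : x = 0 :=
    (ModuleCat.isZero_of_subsingleton (ModuleCat.of R PUnit)).eq_of_src x 0
  rfl
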